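/- The Gaussian binomial coefficient factors as a product of cyclotomic polynomials: [n choose k]_q = Π_{j=2}^{n} Φ_j(q)^{⌊n/j⌋ − ⌊k/j⌋ − ⌊(n−k)/j⌋}, where each exponent ⌊n/j⌋ − ⌊k/j⌋ − ⌊(n−k)/j⌋ is either 0 or 1. -/

import Mathlib

open scoped BigOperators
open Polynomial

/-- The Gaussian (q-)binomial coefficient as a polynomial in `q`. -/
noncomputable def gaussBinom : ℕ → ℕ → Polynomial ℤ
  | _, 0 => 1
  | 0, _ + 1 => 0
  | n + 1, k + 1 => gaussBinom n k + Polynomial.X ^ (k + 1) * gaussBinom n (k + 1)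

noncomputable def qfact (n : ℕ) : Polynomial ℤ :=
  ∏ i ∈ Finset.Icc 1 n, ∑ j ∈ Finset.range i, (Polynomial.X : Polynomial ℤ) ^ j

lemma gaussBinom_zero_of_lt : ∀ n k, n < k → gaussBinom n k = 0 := by
  intro n
  induction n with
  | zero => intro k hk; match k with | k + 1 => rfl
  | succ n ih =>
      intro k hk
      match k with
      | k + 1 =>
        show gaussBinom n k + Polynomial.X ^ (k + 1) * gaussBinom n (k + 1) = 0
        rw [ih k (by omega), ih (k+1) (by omega), mul_zero, add_zero]

lemma gaussBinom_self (n : ℕ) : gaussBinom n n = 1 := by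
  induction n with
  | zero => rfl
  | succ n ih =>
      show gaussBinom n n + Polynomial.X ^ (n + 1) * gaussBinom n (n + 1) = 1
      rw [ih, gaussBinom_zero_of_lt n (n+1) (by omega), mul_zero, add_zero]

lemma qfact_succ (n : ℕ) :
    qfact (n + 1) = qfact n * ∑ j ∈ Finset.range (n+1), (Polynomial.X : Polynomial ℤ) ^ j := by
  rw [qfact, qfact, Finset.prod_Icc_succ_top (Nat.le_add_left 1 n)]

lemma geom_split (a b : ℕ) :
    (∑ j ∈ Finset.range (a + b), (Polynomial.X : Polynomial ℤ) ^ j) =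
      (∑ j ∈ Finset.range a, (Polynomial.X : Polynomial ℤ) ^ j)
        + Polynomial.X ^ a * ∑ j ∈ Finset.range b, (Polynomial.X : Polynomial ℤ) ^ j := by
  rw [Finset.sum_range_add, Finset.mul_sum]
  simp [pow_add]

lemma key : ∀ n k, k ≤ n → gaussBinom n k * qfact k * qfact (n - k) = qfact n := by
  intro n
  induction n with
  | zero => intro k hk; interval_cases k; simp [gaussBinom, qfact]
  | succ n ih =>
      intro k hk
      match k with
      | 0 => simp [gaussBinom, qfact]
      | k + 1 =>
        rcases eq_or_lt_of_le hk with h | h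
        · rw [h, gaussBinom_self]
          simp [qfact]
        · have hk' : k + 1 ≤ n := Nat.lt_succ_iff.mp h
          have hk2 : k ≤ n := le_trans (Nat.le_succ k) hk'
          have ih1 := ih k hk2
          have ih2 := ih (k+1) hk'
          have e1 : n + 1 - (k + 1) = n - k := by omega
          have e2 : n - k = (n - k - 1) + 1 := by omega
          have e3 : n - (k + 1) = n - k - 1 := by omega
          rw [e3] at ih2
          have hq1 := qfact_succ k
          have hq2 := qfact_succ (n - k - 1)
          have hq3 := qfact_succ n
          have hsplit := geom_split (k + 1) (n - k)
          have e4 : k + 1 + (n - k) = n + 1 := by omega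
          rw [e4, e2] at hsplit
          show (gaussBinom n k + Polynomial.X ^ (k + 1) * gaussBinom n (k + 1)) *
              qfact (k+1) * qfact (n + 1 - (k+1)) = qfact (n+1)
          rw [e1, e2, hq1, hq2, hq3, hsplit]
          rw [e2, hq2] at ih1
          rw [hq1] at ih2
          linear_combination (∑ j ∈ Finset.range (k+1), (Polynomial.X : Polynomial ℤ) ^ j) * ih1
            + (Polynomial.X ^ (k+1) * ∑ j ∈ Finset.range ((n-k-1)+1), (Polynomial.X : Polynomial ℤ) ^ j) * ih2

lemma qfact_eq_prod_cyclotomic (n : ℕ) :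
    qfact n = ∏ j ∈ Finset.Icc 2 n, (Polynomial.cyclotomic j ℤ) ^ (n / j) := by
  have h1 : qfact n = ∏ i ∈ Finset.Icc 1 n, ∏ d ∈ i.divisors.erase 1,
      Polynomial.cyclotomic d ℤ := by
    apply Finset.prod_congr rfl
    intro i hi
    rw [Polynomial.prod_cyclotomic_eq_geom_sum (Finset.mem_Icc.mp hi).1]
  rw [h1]
  have h2 : ∀ i ∈ Finset.Icc 1 n, (∏ d ∈ i.divisors.erase 1, Polynomial.cyclotomic d ℤ)
      = ∏ j ∈ Finset.Icc 2 n, (Polynomial.cyclotomic j ℤ) ^ (if j ∣ i then 1 else 0) := by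
    intro i hi
    rw [Finset.mem_Icc] at hi
    have hset : i.divisors.erase 1 = (Finset.Icc 2 n).filter (· ∣ i) := by
      ext d
      simp only [Finset.mem_erase, Nat.mem_divisors, Finset.mem_filter, Finset.mem_Icc]
      constructor
      · rintro ⟨hd1, hdi, hi0⟩
        have := Nat.le_of_dvd (by omega) hdi
        have : d ≠ 0 := by rintro rfl; omega
        exact ⟨⟨by omega, by omega⟩, hdi⟩
      · rintro ⟨⟨hd2, hdn⟩, hdi⟩
        exact ⟨by omega, hdi, by omega⟩
    rw [hset, Finset.prod_filter]
    apply Finset.prod_congr rfl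
    intro j _
    split <;> simp
  rw [Finset.prod_congr rfl h2, Finset.prod_comm]
  apply Finset.prod_congr rfl
  intro j hj
  rw [Finset.prod_pow_eq_pow_sum]
  congr 1
  rw [show Finset.Icc 1 n = Finset.Ioc 0 n from rfl,
    ← Nat.Ioc_filter_dvd_card_eq_div n j, Finset.card_filter]

/-- Cyclotomic factorization of the Gaussian binomial coefficient:
`[n choose k]_q = Π_{j=2}^{n} Φ_j(q)^(⌊n/j⌋ − ⌊k/j⌋ − ⌊(n−k)/j⌋)`, where each
exponent is `0` or `1`. -/
theorem gaussBinom_eq_prod_cyclotomic (n k : ℕ) (hkn : k ≤ n) :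
    gaussBinom n k =
      ∏ j ∈ Finset.Icc 2 n,
        (Polynomial.cyclotomic j ℤ) ^ (n / j - k / j - (n - k) / j) ∧
    ∀ j ∈ Finset.Icc 2 n, n / j - k / j - (n - k) / j ≤ 1 := by
  have hdiv : ∀ j ∈ Finset.Icc 2 n,
      n / j = k / j + (n - k) / j + (n / j - k / j - (n - k) / j) ∧
      n / j - k / j - (n - k) / j ≤ 1 := by
    intro j hj
    rw [Finset.mem_Icc] at hj
    have h := Nat.add_div (a := k) (b := n - k) (show 0 < j by omega)
    rw [Nat.add_sub_cancel' hkn] at h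
    split_ifs at h <;> omega
  refine ⟨?_, fun j hj => (hdiv j hj).2⟩
  have hk := key n k hkn
  rw [qfact_eq_prod_cyclotomic, qfact_eq_prod_cyclotomic, qfact_eq_prod_cyclotomic] at hk
  have hext : ∀ m, m ≤ n → (∏ j ∈ Finset.Icc 2 m, (Polynomial.cyclotomic j ℤ) ^ (m / j))
      = ∏ j ∈ Finset.Icc 2 n, (Polynomial.cyclotomic j ℤ) ^ (m / j) := by
    intro m hm
    apply Finset.prod_subset (Finset.Icc_subset_Icc_right hm)
    intro j hj hj'
    rw [Finset.mem_Icc] at hj hj'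
    rw [Nat.div_eq_of_lt (by omega), pow_zero]
  rw [hext k hkn, hext (n - k) (Nat.sub_le n k)] at hk
  have hrhs : (∏ j ∈ Finset.Icc 2 n, (Polynomial.cyclotomic j ℤ) ^ (n / j))
      = (∏ j ∈ Finset.Icc 2 n, (Polynomial.cyclotomic j ℤ) ^ (k / j)
          * (Polynomial.cyclotomic j ℤ) ^ ((n - k) / j)
          * (Polynomial.cyclotomic j ℤ) ^ (n / j - k / j - (n - k) / j)) := by
    apply Finset.prod_congr rfl
    intro j hj
    rw [← pow_add, ← pow_add, ← (hdiv j hj).1]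
  rw [hrhs, Finset.prod_mul_distrib, Finset.prod_mul_distrib] at hk
  have hne : (∏ j ∈ Finset.Icc 2 n, (Polynomial.cyclotomic j ℤ) ^ (k / j))
      * (∏ j ∈ Finset.Icc 2 n, (Polynomial.cyclotomic j ℤ) ^ ((n - k) / j)) ≠ 0 := by
    apply mul_ne_zero <;>
    · apply Finset.prod_ne_zero_iff.mpr
      intro j _
      exact pow_ne_zero _ (Polynomial.cyclotomic_ne_zero j ℤ)
  apply mul_left_cancel₀ hne
  linear_combination hk
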